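/- Let n ≥ 1 and let u : ℝⁿ → ℝ be a C² function with u(x) ≥ 0 for all x, satisfying the elliptic differential inequality Δu ≥ (2/n)·u² everywhere on ℝⁿ (where Δ is the Euclidean Laplacian). Then u is identically zero. -/

import Mathlib

open Filter Metric Set

/-! ### Auxiliary lemmas -/

/-- 1-D second derivative test: at a local max, the second derivative is nonpositive. -/
lemma second_deriv_nonpos_of_isLocalMax {g : ℝ → ℝ} {c : ℝ}
    (hd : ∀ᶠ t in nhds (0:ℝ), DifferentiableAt ℝ g t)
    (hc : HasDerivAt (deriv g) c 0) (hmax : IsLocalMax g 0) : c ≤ 0 := by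
  by_contra h
  push_neg at h
  have h0 : deriv g 0 = 0 := hmax.deriv_eq_zero
  have hslope : Filter.Tendsto (fun t => deriv g t / t) (nhdsWithin (0:ℝ) {(0:ℝ)}ᶜ) (nhds c) := by
    have h1 := hasDerivAt_iff_tendsto_slope.mp hc
    have : slope (deriv g) 0 = fun t => deriv g t / t := by
      funext t; rw [slope_def_field]; simp [h0]
    rwa [this] at h1
  have hpos : ∀ᶠ t in nhdsWithin (0:ℝ) {(0:ℝ)}ᶜ, 0 < deriv g t / t :=
    hslope.eventually (eventually_gt_nhds h)
  rw [eventually_nhdsWithin_iff] at hpos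
  have hall : ∀ᶠ t in nhds (0:ℝ),
      (t ∈ ({(0:ℝ)}ᶜ : Set ℝ) → 0 < deriv g t / t) ∧ DifferentiableAt ℝ g t ∧ g t ≤ g 0 :=
    hpos.and (hd.and hmax)
  rw [Metric.eventually_nhds_iff] at hall
  obtain ⟨δ, hδ, hδall⟩ := hall
  have key : ∀ t : ℝ, |t| < δ →
      (t ≠ 0 → 0 < deriv g t / t) ∧ DifferentiableAt ℝ g t ∧ g t ≤ g 0 := by
    intro t ht
    have := hδall (show dist t 0 < δ by simpa [Real.dist_eq] using ht)
    exact ⟨fun h' => this.1 h', this.2⟩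
  have hmono : StrictMonoOn g (Set.Icc 0 (δ/2)) := by
    apply strictMonoOn_of_deriv_pos (convex_Icc 0 (δ/2))
    · intro t ht
      have : |t| < δ := by
        rw [abs_lt]; constructor <;> [linarith [ht.1]; linarith [ht.2]]
      exact ((key t this).2.1).continuousAt.continuousWithinAt
    · intro t ht
      rw [interior_Icc] at ht
      have habs : |t| < δ := by
        rw [abs_lt]; constructor <;> [linarith [ht.1]; linarith [ht.2]]
      have h1 := ((key t habs).1 (ne_of_gt ht.1))
      have := mul_pos ht.1 h1
      rwa [mul_div_cancel₀ _ (ne_of_gt ht.1)] at this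
  have h1 : g 0 < g (δ/2) := hmono (by constructor <;> [rfl; positivity])
    (by constructor <;> [positivity; rfl]) (by positivity)
  have h2 : g (δ/2) ≤ g 0 := ((key (δ/2) (by rw [abs_of_pos (by positivity)]; linarith)).2.2)
  linarith

/-- Directional second derivative test at a local maximum. -/
lemma second_dir_deriv_nonpos_of_isLocalMax {E : Type*}
    [NormedAddCommGroup E] [NormedSpace ℝ E]
    {f : E → ℝ} {x e : E}
    (hf : ∀ᶠ y in nhds x, DifferentiableAt ℝ f y)
    (hF : DifferentiableAt ℝ (fun y => fderiv ℝ f y e) x)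
    (hmax : IsLocalMax f x) :
    fderiv ℝ (fun y => fderiv ℝ f y e) x e ≤ 0 := by
  set L : ℝ → E := fun t => x + t • e with hLdef
  have hL : ∀ t : ℝ, HasDerivAt L e t := by
    intro t
    have h := (((hasDerivAt_id t).smul_const e).const_add x); simp only [one_smul] at h; exact h
  have hL0 : L 0 = x := by simp [hLdef]
  have hLt : Tendsto L (nhds 0) (nhds x) := by
    have := (hL 0).continuousAt.tendsto
    rwa [hL0] at this
  set g : ℝ → ℝ := fun t => f (L t) with hgdef
  have hmaxg : IsLocalMax g 0 := by
    have hmax' : IsMaxFilter f (nhds x) (L 0) := by rwa [hL0]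
    exact hmax'.comp_tendsto hLt
  have hdg : ∀ᶠ t in nhds (0:ℝ), DifferentiableAt ℝ f (L t) := hLt.eventually hf
  have hderiv_g : ∀ᶠ t in nhds (0:ℝ),
      deriv g t = fderiv ℝ f (L t) e ∧ DifferentiableAt ℝ g t := by
    filter_upwards [hdg] with t hft
    have h1 : HasDerivAt g (fderiv ℝ f (L t) e) t :=
      hft.hasFDerivAt.comp_hasDerivAt t (hL t)
    exact ⟨h1.deriv, h1.differentiableAt⟩
  have hFc : HasDerivAt (fun t => fderiv ℝ f (L t) e)
      (fderiv ℝ (fun y => fderiv ℝ f y e) x e) 0 := by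
    have hF' : HasFDerivAt (fun y => fderiv ℝ f y e)
        (fderiv ℝ (fun y => fderiv ℝ f y e) x) (L 0) := by rw [hL0]; exact hF.hasFDerivAt
    exact hF'.comp_hasDerivAt 0 (hL 0)
  have hc : HasDerivAt (deriv g) (fderiv ℝ (fun y => fderiv ℝ f y e) x e) 0 :=
    hFc.congr_of_eventuallyEq (by filter_upwards [hderiv_g] with t ht using ht.1)
  exact second_deriv_nonpos_of_isLocalMax
    (by filter_upwards [hderiv_g] with t ht using ht.2) hc hmaxg

/-- First derivative of the barrier function. -/
lemma barrier_hasFDerivAt {n : ℕ} (x₀ : EuclideanSpace ℝ (Fin n)) (R a : ℝ)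
    (y : EuclideanSpace ℝ (Fin n)) (hy : R ^ 2 - ‖y - x₀‖ ^ 2 ≠ 0) :
    HasFDerivAt (fun z => a * ((R ^ 2 - ‖z - x₀‖ ^ 2) ^ 2)⁻¹)
      ((4 * a * ((R ^ 2 - ‖y - x₀‖ ^ 2) ^ 3)⁻¹) • (innerSL ℝ (y - x₀))) y := by
  set s : ℝ := R ^ 2 - ‖y - x₀‖ ^ 2 with hs
  have h1 : HasFDerivAt (fun z : EuclideanSpace ℝ (Fin n) => R ^ 2 - ‖z - x₀‖ ^ 2)
      (-(2 • (innerSL ℝ (y - x₀)))) y := by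
    simpa using (((hasFDerivAt_id y).sub_const x₀).norm_sq).const_sub (R ^ 2)
  have h2 : HasDerivAt (fun t : ℝ => a * (t ^ 2)⁻¹) (a * (-(2 * s ^ 1) / (s ^ 2) ^ 2)) s :=
    ((hasDerivAt_pow 2 s).inv (pow_ne_zero 2 hy)).const_mul a
  have := h2.comp_hasFDerivAt y h1
  refine this.congr_fderiv ?_
  ext z
  simp only [ContinuousLinearMap.smul_apply, ContinuousLinearMap.neg_apply,
    smul_eq_mul]
  field_simp
  ring

lemma barrier_fderiv_apply {n : ℕ} (x₀ : EuclideanSpace ℝ (Fin n)) (R a : ℝ)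
    (y : EuclideanSpace ℝ (Fin n)) (hy : R ^ 2 - ‖y - x₀‖ ^ 2 ≠ 0) (i : Fin n) :
    fderiv ℝ (fun z => a * ((R ^ 2 - ‖z - x₀‖ ^ 2) ^ 2)⁻¹) y (EuclideanSpace.single i 1)
      = 4 * a * ((R ^ 2 - ‖y - x₀‖ ^ 2) ^ 3)⁻¹ * (y i - x₀ i) := by
  rw [(barrier_hasFDerivAt x₀ R a y hy).fderiv]
  simp [real_inner_comm, EuclideanSpace.inner_single_left, EuclideanSpace.inner_single_right]

/-- Second directional derivative data for the barrier function. -/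
lemma barrier_second {n : ℕ} (x₀ : EuclideanSpace ℝ (Fin n)) (R a : ℝ)
    (y : EuclideanSpace ℝ (Fin n)) (hy : R ^ 2 - ‖y - x₀‖ ^ 2 ≠ 0) (i : Fin n) :
    ∃ Φ : EuclideanSpace ℝ (Fin n) →L[ℝ] ℝ,
      HasFDerivAt (fun z => 4 * a * ((R ^ 2 - ‖z - x₀‖ ^ 2) ^ 3)⁻¹ * (z i - x₀ i)) Φ y ∧
      Φ (EuclideanSpace.single i 1)
        = 24 * a * ((R ^ 2 - ‖y - x₀‖ ^ 2) ^ 4)⁻¹ * (y i - x₀ i) ^ 2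
          + 4 * a * ((R ^ 2 - ‖y - x₀‖ ^ 2) ^ 3)⁻¹ := by
  set s : ℝ := R ^ 2 - ‖y - x₀‖ ^ 2 with hs
  have h1 : HasFDerivAt (fun z : EuclideanSpace ℝ (Fin n) => R ^ 2 - ‖z - x₀‖ ^ 2)
      (-(2 • (innerSL ℝ (y - x₀)))) y := by
    simpa using (((hasFDerivAt_id y).sub_const x₀).norm_sq).const_sub (R ^ 2)
  have hg1 : HasFDerivAt
      (fun z : EuclideanSpace ℝ (Fin n) => 4 * a * ((R ^ 2 - ‖z - x₀‖ ^ 2) ^ 3)⁻¹)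
      ((24 * a * (s ^ 4)⁻¹) • (innerSL ℝ (y - x₀))) y := by
    have h2 : HasDerivAt (fun t : ℝ => 4 * a * (t ^ 3)⁻¹)
        (4 * a * (-(3 * s ^ 2) / (s ^ 3) ^ 2)) s :=
      ((hasDerivAt_pow 3 s).inv (pow_ne_zero 3 hy)).const_mul (4 * a)
    have := h2.comp_hasFDerivAt y h1
    refine this.congr_fderiv ?_
    ext z
    simp only [ContinuousLinearMap.smul_apply, ContinuousLinearMap.neg_apply, smul_eq_mul]
    field_simp
    ring
  have hg2 : HasFDerivAt (fun z : EuclideanSpace ℝ (Fin n) => z i - x₀ i)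
      (EuclideanSpace.proj i : EuclideanSpace ℝ (Fin n) →L[ℝ] ℝ) y := by
    have h : HasFDerivAt (fun z : EuclideanSpace ℝ (Fin n) =>
        (EuclideanSpace.proj i : EuclideanSpace ℝ (Fin n) →L[ℝ] ℝ) z)
        (EuclideanSpace.proj i : EuclideanSpace ℝ (Fin n) →L[ℝ] ℝ) y :=
      ContinuousLinearMap.hasFDerivAt _
    simpa using h.sub_const (x₀ i)
  refine ⟨_, hg1.mul hg2, ?_⟩
  simp only [ContinuousLinearMap.add_apply, ContinuousLinearMap.smul_apply, smul_eq_mul,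
    real_inner_comm, EuclideanSpace.inner_single_left]
  simp [EuclideanSpace.inner_single_left, EuclideanSpace.inner_single_right, real_inner_comm]
  ring

lemma sum_sq_eq_norm_sq {n : ℕ} (w : EuclideanSpace ℝ (Fin n)) :
    ∑ i, (w i) ^ 2 = ‖w‖ ^ 2 := by
  rw [← real_inner_self_eq_norm_sq]
  rw [PiLp.inner_apply]
  exact Finset.sum_congr rfl fun i _ => by simp [sq]

/-- The Euclidean Laplacian of `u : ℝⁿ → ℝ`, i.e. the trace of the Hessian,
computed as the sum of the pure second directional derivatives along the
standard orthonormal basis. -/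
noncomputable def laplacian {n : ℕ} (u : EuclideanSpace ℝ (Fin n) → ℝ)
    (x : EuclideanSpace ℝ (Fin n)) : ℝ :=
  ∑ i : Fin n,
    fderiv ℝ (fun y => fderiv ℝ u y (EuclideanSpace.single i 1)) x
      (EuclideanSpace.single i 1)

set_option maxHeartbeats 1000000 in
/-- Let `n ≥ 1` and let `u : ℝⁿ → ℝ` be a C² function with `u ≥ 0` everywhere,
satisfying `Δu ≥ (2/n)·u²` everywhere. Then `u` is identically zero. -/
theorem nonneg_solution_of_elliptic_ineq_vanishes
    {n : ℕ} (hn : 1 ≤ n) (u : EuclideanSpace ℝ (Fin n) → ℝ)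
    (hu : ContDiff ℝ 2 u)
    (hnonneg : ∀ x, 0 ≤ u x)
    (hineq : ∀ x, laplacian u x ≥ (2 / (n : ℝ)) * (u x) ^ 2) :
    ∀ x, u x = 0 := by
  have hn' : (0:ℝ) < n := by
    have : (1:ℝ) ≤ n := by exact_mod_cast hn
    linarith
  have hu_diff : ∀ y, DifferentiableAt ℝ u y :=
    fun y => (hu.differentiable (by norm_num)).differentiableAt
  have hU : ∀ e, Differentiable ℝ (fun y => fderiv ℝ u y e) := by
    intro e
    have h1 : ContDiff ℝ 1 (fderiv ℝ u) := hu.fderiv_right (by norm_num)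
    exact (h1.differentiable (by norm_num)).clm_apply (differentiable_const e)
  intro x₀
  refine le_antisymm ?_ (hnonneg x₀)
  have key : ∀ R : ℝ, 0 < R → u x₀ ≤ 2 * n * (n + 6) / R ^ 2 := by
    intro R hR
    set a : ℝ := 2 * n * (n + 6) * R ^ 2 with ha_def
    have ha : 0 < a := by positivity
    set v : EuclideanSpace ℝ (Fin n) → ℝ :=
      fun z => a * ((R ^ 2 - ‖z - x₀‖ ^ 2) ^ 2)⁻¹ with hv_def
    obtain ⟨z₀, hz₀mem, hz₀⟩ := (isCompact_closedBall x₀ R).exists_isMaxOn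
      (Set.nonempty_of_mem (Metric.mem_closedBall_self hR.le)) (hu.continuous.continuousOn)
    set M : ℝ := u z₀ with hM_def
    have hM0 : 0 ≤ M := hnonneg _
    set sb : ℝ := min (R ^ 2) (Real.sqrt (a / (M + 1))) with hsb_def
    have hsb_pos : 0 < sb := lt_min (by positivity) (Real.sqrt_pos.mpr (by positivity))
    have hsb_le : sb ≤ R ^ 2 := min_le_left _ _
    have hsb_sq : sb ^ 2 ≤ a / (M + 1) := by
      have h1 : sb ≤ Real.sqrt (a / (M + 1)) := min_le_right _ _
      calc sb ^ 2 ≤ (Real.sqrt (a / (M + 1))) ^ 2 := by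
            apply pow_le_pow_left₀ hsb_pos.le h1
        _ = a / (M + 1) := Real.sq_sqrt (by positivity)
    set r : ℝ := Real.sqrt (R ^ 2 - sb) with hr_def
    have hr0 : 0 ≤ r := Real.sqrt_nonneg _
    have hr2 : r ^ 2 = R ^ 2 - sb := Real.sq_sqrt (by linarith)
    have hrR : r < R := by nlinarith
    have hs_lb : ∀ y : EuclideanSpace ℝ (Fin n), ‖y - x₀‖ ≤ r →
        sb ≤ R ^ 2 - ‖y - x₀‖ ^ 2 := by
      intro y hy
      nlinarith [norm_nonneg (y - x₀)]
    have hvcont : ContinuousOn v (Metric.closedBall x₀ r) := by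
      apply ContinuousOn.mul continuousOn_const
      apply ContinuousOn.inv₀
      · exact (((continuous_const.sub
          (((continuous_id.sub continuous_const).norm).pow 2))).pow 2).continuousOn
      · intro y hy
        rw [Metric.mem_closedBall, dist_eq_norm] at hy
        have h' : 0 < R ^ 2 - ‖y - x₀‖ ^ 2 := lt_of_lt_of_le hsb_pos (hs_lb y hy)
        positivity
    obtain ⟨x₁, hx₁mem, hx₁⟩ := (isCompact_closedBall x₀ r).exists_isMaxOn
      (Set.nonempty_of_mem (Metric.mem_closedBall_self hr0))
      ((hu.continuous.continuousOn).sub hvcont)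
    have hx₁le : ‖x₁ - x₀‖ ≤ r := by
      rw [← dist_eq_norm]; exact hx₁mem
    by_cases hcase : u x₁ - v x₁ ≤ 0
    · have h0 : u x₀ - v x₀ ≤ u x₁ - v x₁ := (isMaxOn_iff.mp hx₁) x₀
        (Metric.mem_closedBall_self hr0)
      have hvx₀ : v x₀ = 2 * n * (n + 6) / R ^ 2 := by
        show a * ((R ^ 2 - ‖x₀ - x₀‖ ^ 2) ^ 2)⁻¹ = _
        rw [sub_self, norm_zero, ha_def]
        have : (0:ℝ) ^ 2 = 0 := by norm_num
        rw [this, sub_zero]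
        field_simp
      linarith
    · exfalso
      push_neg at hcase
      have hx₁lt : ‖x₁ - x₀‖ < r := by
        rcases lt_or_eq_of_le hx₁le with h | h
        · exact h
        · exfalso
          have hsx₁ : R ^ 2 - ‖x₁ - x₀‖ ^ 2 = sb := by rw [h, hr2]; ring
          have hv_ge : M + 1 ≤ v x₁ := by
            have h2 : (M + 1) * sb ^ 2 ≤ a := by
              have := mul_le_mul_of_nonneg_left hsb_sq (by linarith : (0:ℝ) ≤ M + 1)
              rwa [mul_div_cancel₀ _ (by linarith : M + 1 ≠ 0)] at this
            have hveq : v x₁ = a * (sb ^ 2)⁻¹ := by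
              show a * ((R ^ 2 - ‖x₁ - x₀‖ ^ 2) ^ 2)⁻¹ = _
              rw [hsx₁]
            rw [hveq]
            calc M + 1 = (M + 1) * sb ^ 2 * (sb ^ 2)⁻¹ := by
                  field_simp
              _ ≤ a * (sb ^ 2)⁻¹ := mul_le_mul_of_nonneg_right h2 (by positivity)
          have hux₁ : u x₁ ≤ M := (isMaxOn_iff.mp hz₀) x₁ (by
            rw [Metric.mem_closedBall, dist_eq_norm]
            linarith)
          linarith
      have hs₁pos : 0 < R ^ 2 - ‖x₁ - x₀‖ ^ 2 := by
        have := hs_lb x₁ hx₁le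
        linarith
      have hball : Metric.closedBall x₀ r ∈ nhds x₁ :=
        mem_nhds_iff.mpr ⟨Metric.ball x₀ r, Metric.ball_subset_closedBall, Metric.isOpen_ball,
          by rw [Metric.mem_ball, dist_eq_norm]; exact hx₁lt⟩
      have hlocmax : IsLocalMax (fun y => u y - v y) x₁ := hx₁.isLocalMax hball
      have hs_ev : ∀ᶠ z in nhds x₁, 0 < R ^ 2 - ‖z - x₀‖ ^ 2 := by
        have hc : Continuous fun z : EuclideanSpace ℝ (Fin n) => R ^ 2 - ‖z - x₀‖ ^ 2 :=
          continuous_const.sub (((continuous_id.sub continuous_const).norm).pow 2)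
        exact (hc.tendsto x₁).eventually (eventually_gt_nhds hs₁pos)
      have hw_diff : ∀ᶠ z in nhds x₁, DifferentiableAt ℝ (fun y => u y - v y) z := by
        filter_upwards [hs_ev] with z hz
        exact (hu_diff z).sub (barrier_hasFDerivAt x₀ R a z hz.ne').differentiableAt
      -- per-direction estimate
      have hdir : ∀ i : Fin n,
          fderiv ℝ (fun y => fderiv ℝ u y (EuclideanSpace.single i 1)) x₁
              (EuclideanSpace.single i 1)
            ≤ 24 * a * ((R ^ 2 - ‖x₁ - x₀‖ ^ 2) ^ 4)⁻¹ * (x₁ i - x₀ i) ^ 2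
              + 4 * a * ((R ^ 2 - ‖x₁ - x₀‖ ^ 2) ^ 3)⁻¹ := by
        intro i
        set e : EuclideanSpace ℝ (Fin n) := EuclideanSpace.single i 1 with he_def
        obtain ⟨Φ, hΦ, hΦval⟩ := barrier_second x₀ R a x₁ hs₁pos.ne' i
        have hw_fderiv_ev : (fun z => fderiv ℝ (fun y => u y - v y) z e)
            =ᶠ[nhds x₁] fun z => fderiv ℝ u z e
              - 4 * a * ((R ^ 2 - ‖z - x₀‖ ^ 2) ^ 3)⁻¹ * (z i - x₀ i) := by
          filter_upwards [hs_ev] with z hz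
          have hvz : DifferentiableAt ℝ v z :=
            (barrier_hasFDerivAt x₀ R a z hz.ne').differentiableAt
          rw [fderiv_fun_sub (hu_diff z) hvz]
          simp only [ContinuousLinearMap.sub_apply]
          rw [barrier_fderiv_apply x₀ R a z hz.ne' i]
        have hFdiff : DifferentiableAt ℝ
            (fun z => fderiv ℝ (fun y => u y - v y) z e) x₁ := by
          rw [hw_fderiv_ev.differentiableAt_iff]
          exact ((hU e) x₁).sub hΦ.differentiableAt
        have hle := second_dir_deriv_nonpos_of_isLocalMax hw_diff hFdiff hlocmax
        have heq : fderiv ℝ (fun z => fderiv ℝ (fun y => u y - v y) z e) x₁ e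
            = fderiv ℝ (fun z => fderiv ℝ u z e) x₁ e - Φ e := by
          rw [hw_fderiv_ev.fderiv_eq]
          rw [fderiv_fun_sub ((hU e) x₁) hΦ.differentiableAt, hΦ.fderiv]
          simp
        rw [heq] at hle
        rw [← hΦval]
        linarith
      -- sum over directions
      have hsum_sq : ∑ i, (x₁ i - x₀ i) ^ 2 = ‖x₁ - x₀‖ ^ 2 := by
        rw [← sum_sq_eq_norm_sq (x₁ - x₀)]
        exact Finset.sum_congr rfl fun i _ => by simp [PiLp.sub_apply]
      set s₁ : ℝ := R ^ 2 - ‖x₁ - x₀‖ ^ 2 with hs₁_def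
      have hlap_le : laplacian u x₁
          ≤ 24 * a * (s₁ ^ 4)⁻¹ * ‖x₁ - x₀‖ ^ 2 + n * (4 * a * (s₁ ^ 3)⁻¹) := by
        calc laplacian u x₁
            ≤ ∑ i : Fin n, (24 * a * (s₁ ^ 4)⁻¹ * (x₁ i - x₀ i) ^ 2 + 4 * a * (s₁ ^ 3)⁻¹) :=
              Finset.sum_le_sum fun i _ => hdir i
          _ = 24 * a * (s₁ ^ 4)⁻¹ * ‖x₁ - x₀‖ ^ 2 + n * (4 * a * (s₁ ^ 3)⁻¹) := by
              rw [Finset.sum_add_distrib, ← Finset.mul_sum, hsum_sq, Finset.sum_const,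
                Finset.card_univ, Fintype.card_fin, nsmul_eq_mul]
      have hvx₁ : v x₁ = a * (s₁ ^ 2)⁻¹ := rfl
      have hvpos : 0 < v x₁ := by rw [hvx₁]; positivity
      have hρR : ‖x₁ - x₀‖ ^ 2 ≤ R ^ 2 := by nlinarith [norm_nonneg (x₁ - x₀)]
      have hs₁R : s₁ ≤ R ^ 2 := by rw [hs₁_def]; nlinarith [norm_nonneg (x₁ - x₀)]
      have hbarrier_bound : 24 * a * (s₁ ^ 4)⁻¹ * ‖x₁ - x₀‖ ^ 2 + n * (4 * a * (s₁ ^ 3)⁻¹)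
          ≤ 2 / n * (v x₁) ^ 2 := by
        have hinv3 : (s₁ ^ 3)⁻¹ = s₁ * (s₁ ^ 4)⁻¹ := by
          have h4 : s₁ ^ 4 = s₁ * s₁ ^ 3 := by ring
          rw [h4, mul_inv, ← mul_assoc, mul_inv_cancel₀ hs₁pos.ne', one_mul]
        rw [hvx₁, hinv3]
        have hpow : ((s₁ ^ 2)⁻¹) ^ 2 = (s₁ ^ 4)⁻¹ := by
          rw [inv_pow, ← pow_mul]
        have hrhs : 2 / (n:ℝ) * (a * (s₁ ^ 2)⁻¹) ^ 2 = (2 * a ^ 2 / n) * (s₁ ^ 4)⁻¹ := by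
          rw [mul_pow, hpow]
          ring
        rw [hrhs]
        have hlhs : 24 * a * (s₁ ^ 4)⁻¹ * ‖x₁ - x₀‖ ^ 2 + n * (4 * a * (s₁ * (s₁ ^ 4)⁻¹))
            = (24 * a * ‖x₁ - x₀‖ ^ 2 + 4 * a * n * s₁) * (s₁ ^ 4)⁻¹ := by ring
        rw [hlhs]
        apply mul_le_mul_of_nonneg_right _ (by positivity)
        rw [le_div_iff₀ hn']
        have hkey : (24 * a * R ^ 2 + 4 * a * n * R ^ 2) * n = 2 * a ^ 2 := by
          rw [ha_def]; ring
        nlinarith [mul_le_mul_of_nonneg_left hρR (by positivity : (0:ℝ) ≤ 24 * a),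
          mul_le_mul_of_nonneg_left hs₁R (by positivity : (0:ℝ) ≤ 4 * a * n)]
      have hchain : 2 / (n:ℝ) * (u x₁) ^ 2 ≤ 2 / n * (v x₁) ^ 2 := by
        calc 2 / (n:ℝ) * (u x₁) ^ 2 ≤ laplacian u x₁ := hineq x₁
          _ ≤ _ := hlap_le
          _ ≤ 2 / n * (v x₁) ^ 2 := hbarrier_bound
      have hsq : (u x₁) ^ 2 ≤ (v x₁) ^ 2 :=
        le_of_mul_le_mul_left (by linarith [hchain]) (by positivity : (0:ℝ) < 2 / n)
      nlinarith [hnonneg x₁, hvpos, hcase]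
  by_contra hpos
  push_neg at hpos
  have hC : (0:ℝ) < 2 * n * (n + 6) := by positivity
  set R : ℝ := Real.sqrt (2 * (2 * n * (n + 6)) / u x₀) with hR_def
  have hRpos : 0 < R := Real.sqrt_pos.mpr (by positivity)
  have hR2 : R ^ 2 = 2 * (2 * n * (n + 6)) / u x₀ := Real.sq_sqrt (by positivity)
  have hk := key R hRpos
  rw [hR2] at hk
  have heq : 2 * (n:ℝ) * (n + 6) / (2 * (2 * n * (n + 6)) / u x₀) = u x₀ / 2 := by
    field_simp
  rw [heq] at hk
  linarith
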